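/- arXiv:2603.22802 — 3 statements merged into one kernel-verified Lean document; each statement's English description precedes it below -/
import Mathlib

section
/- Let φ : ℝ → ℝ be continuous, monotonically increasing with φ(0) = 0 and r·φ(r) > 0 for all r ≠ 0, and suppose ∫₀^{v₀} dv/φ(v) < ∞ for every v₀ > 0. If v : [0,∞) → ℝ is a solution of the scalar ODE v' = -φ(v) with v(0) = v₀ > 0, then v(t) = 0 for all t ≥ T(v₀) where T(v₀) = ∫₀^{v₀} dv/φ(v) < ∞; in particular v reaches zero in finite time. -/
open MeasureTheory Set

theorem finite_time_convergence_scalar_ode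
    (φ : ℝ → ℝ) (hφc : Continuous φ) (hφmono : Monotone φ)
    (hφ0 : φ 0 = 0) (hφpos : ∀ r : ℝ, r ≠ 0 → r * φ r > 0)
    (hint : ∀ v₀ > (0:ℝ), IntegrableOn (fun s => (φ s)⁻¹) (Ioc 0 v₀))
    (v : ℝ → ℝ) (v₀ : ℝ) (hv₀ : 0 < v₀)
    (hsol : ∀ t ≥ (0:ℝ), HasDerivAt v (-φ (v t)) t)
    (hinit : v 0 = v₀) :
    ∀ t ≥ ∫ s in Ioc (0:ℝ) v₀, (φ s)⁻¹, v t = 0 := by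
  set T := ∫ s in Ioc (0:ℝ) v₀, (φ s)⁻¹ with hTdef
  have hφpos' : ∀ s : ℝ, 0 < s → 0 < φ s := by
    intro s hs
    rcases mul_pos_iff.1 (hφpos s hs.ne') with ⟨_, h⟩ | ⟨h, _⟩
    · exact h
    · linarith
  have hT0 : 0 ≤ T := by
    apply setIntegral_nonneg measurableSet_Ioc
    intro s hs
    exact (inv_nonneg).2 (hφpos' s hs.1).le
  -- continuity of v on [0,∞)
  have hvc : ∀ t : ℝ, 0 ≤ t → ContinuousAt v t := fun t ht => (hsol t ht).continuousAt
  -- Step 1: once v hits zero at some t₀ ≥ 0, it stays zero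
  have zero_stays : ∀ t₀, 0 ≤ t₀ → v t₀ = 0 → ∀ t, t₀ ≤ t → v t = 0 := by
    intro t₀ ht₀ hvt₀ t ht
    have hw : ∀ x ∈ Ici (0:ℝ), HasDerivAt (fun s => v s ^ 2) (2 * v x * (-φ (v x))) x := by
      intro x hx
      have := (hsol x hx).fun_pow 2
      simpa [mul_comm, mul_assoc, mul_left_comm] using this
    have hanti : AntitoneOn (fun s => v s ^ 2) (Ici 0) := by
      apply antitoneOn_of_deriv_nonpos (convex_Ici 0)
      · intro x hx
        exact ((hw x hx).continuousAt).continuousWithinAt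
      · intro x hx
        rw [interior_Ici] at hx
        exact (hw x (mem_Ici.2 (le_of_lt (mem_Ioi.1 hx)))).differentiableAt.differentiableWithinAt
      · intro x hx
        rw [interior_Ici] at hx
        rw [(hw x (mem_Ici.2 (le_of_lt (mem_Ioi.1 hx)))).deriv]
        have hvφ : 0 ≤ v x * φ (v x) := by
          rcases eq_or_ne (v x) 0 with h | h
          · simp [h]
          · exact (hφpos _ h).le
        nlinarith
    have h1 : v t ^ 2 ≤ v t₀ ^ 2 := hanti ht₀ (le_trans ht₀ ht) ht
    have h2 : (0:ℝ) ≤ v t ^ 2 := sq_nonneg _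
    have : v t ^ 2 = 0 := by rw [hvt₀] at h1; nlinarith
    exact pow_eq_zero_iff (two_ne_zero) |>.mp this
  -- Step 2: v hits zero somewhere in [0, T]
  have hits : ∃ t₀ ∈ Icc (0:ℝ) T, v t₀ = 0 := by
    by_contra hne
    push_neg at hne
    -- v is positive on [0, T]
    have hvcont : ContinuousOn v (Icc 0 T) := fun x hx => (hvc x hx.1).continuousWithinAt
    have hposv : ∀ t ∈ Icc (0:ℝ) T, 0 < v t := by
      intro t htm
      by_contra hle
      push_neg at hle
      have hlt : v t < 0 := lt_of_le_of_ne hle (hne t htm)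
      have hsub : Icc (0:ℝ) t ⊆ Icc 0 T := Icc_subset_Icc le_rfl htm.2
      have : (0:ℝ) ∈ Icc (v t) (v 0) := by
        constructor
        · linarith
        · rw [hinit]; exact hv₀.le
      obtain ⟨c, hc, hvc0⟩ := intermediate_value_Icc' htm.1 (hvcont.mono hsub) this
      exact hne c (hsub hc) hvc0
    -- v is antitone on [0, T]
    have hvanti : AntitoneOn v (Icc 0 T) := by
      apply antitoneOn_of_deriv_nonpos (convex_Icc 0 T) hvcont
      · intro x hx
        rw [interior_Icc] at hx
        exact (hsol x hx.1.le).differentiableAt.differentiableWithinAt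
      · intro x hx
        rw [interior_Icc] at hx
        rw [(hsol x hx.1.le).deriv]
        have : 0 < φ (v x) := hφpos' _ (hposv x (Ioo_subset_Icc_self hx))
        linarith
    set m := v T with hmdef
    have hTmem : T ∈ Icc (0:ℝ) T := ⟨hT0, le_rfl⟩
    have h0mem : (0:ℝ) ∈ Icc (0:ℝ) T := ⟨le_rfl, hT0⟩
    have hm : 0 < m := hposv T hTmem
    have hrange : ∀ t ∈ Icc (0:ℝ) T, v t ∈ Icc m v₀ := by
      intro t htm
      constructor
      · exact hvanti htm hTmem htm.2
      · rw [← hinit]; exact hvanti h0mem htm htm.1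
    have hmle : m ≤ v₀ := by
      have := hrange T hTmem
      exact le_trans this.1 this.2
    set f : ℝ → ℝ := fun s => (φ s)⁻¹ with hfdef
    have hfca : ∀ x : ℝ, 0 < x → ContinuousAt f x := by
      intro x hx
      exact (hφc.continuousAt).inv₀ (hφpos' x hx).ne'
    have hfmeas : StronglyMeasurable f := (hφc.measurable.inv).stronglyMeasurable
    set Φ : ℝ → ℝ := fun x => ∫ s in m..x, f s with hΦdef
    have hΦd : ∀ x ∈ Icc m v₀, HasDerivAt Φ (f x) x := by
      intro x hx
      apply intervalIntegral.integral_hasDerivAt_right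
      · apply ContinuousOn.intervalIntegrable
        intro s hs
        rw [uIcc_of_le hx.1] at hs
        exact (hfca s (lt_of_lt_of_le hm hs.1)).continuousWithinAt
      · exact hfmeas.stronglyMeasurableAtFilter
      · exact hfca x (lt_of_lt_of_le hm hx.1)
    set g : ℝ → ℝ := fun t => Φ (v t) + t with hgdef
    have hgd : ∀ t ∈ Icc (0:ℝ) T, HasDerivAt g 0 t := by
      intro t htm
      have h1 : HasDerivAt (fun t => Φ (v t)) (f (v t) * (-φ (v t))) t :=
        (hΦd (v t) (hrange t htm)).comp t (hsol t htm.1)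
      have h2 : HasDerivAt g (f (v t) * (-φ (v t)) + 1) t := h1.add (hasDerivAt_id t)
      have hne0 : φ (v t) ≠ 0 := (hφpos' _ (hposv t htm)).ne'
      have : f (v t) * (-φ (v t)) + 1 = 0 := by
        simp only [hfdef]
        field_simp
        ring
      rwa [this] at h2
    have hgconst : g T = g 0 := by
      have hgc : ContinuousOn g (Icc 0 T) := fun x hx => ((hgd x hx).continuousAt).continuousWithinAt
      have := constant_of_has_deriv_right_zero hgc
        (fun x hx => ((hgd x (Ico_subset_Icc_self hx)).hasDerivWithinAt))
      exact this T hTmem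
    -- unfold: Φ m + T = Φ v₀
    have hΦm : Φ m = 0 := by simp [hΦdef]
    have hkey : T = ∫ s in Ioc m v₀, f s := by
      have : Φ m + T = Φ v₀ + 0 := by
        simpa [hgdef, hmdef, hinit] using hgconst
      rw [hΦm] at this
      rw [hΦdef] at this
      simp only [add_zero, zero_add] at this
      rw [this, intervalIntegral.integral_of_le hmle]
    -- split the integral
    have hintfull : IntegrableOn f (Ioc 0 v₀) := hint v₀ hv₀
    have hsplit : T = (∫ s in Ioc 0 m, f s) + ∫ s in Ioc m v₀, f s := by
      rw [hTdef]
      rw [← setIntegral_union (Ioc_disjoint_Ioc_of_le le_rfl) measurableSet_Ioc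
        (hintfull.mono_set (Ioc_subset_Ioc_right hmle))
        (hintfull.mono_set (Ioc_subset_Ioc_left hm.le))]
      rw [Ioc_union_Ioc_eq_Ioc hm.le hmle]
    have hzero : (∫ s in Ioc 0 m, f s) = 0 := by linarith [hkey, hsplit]
    have hpos : 0 < ∫ s in Ioc 0 m, f s := by
      have hf : 0 ≤ᶠ[ae (volume.restrict (Ioc (0:ℝ) m))] f := by
        filter_upwards [ae_restrict_mem measurableSet_Ioc] with s hs
        exact (inv_nonneg).2 (hφpos' s hs.1).le
      have hfi : IntegrableOn f (Ioc 0 m) := hintfull.mono_set (Ioc_subset_Ioc_right hmle)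
      rw [setIntegral_pos_iff_support_of_nonneg_ae hf hfi]
      have hsub : Ioc (0:ℝ) m ⊆ Function.support f ∩ Ioc 0 m := by
        intro s hs
        exact ⟨fun h => absurd h ((inv_pos.2 (hφpos' s hs.1)).ne'), hs⟩
      calc (0:ENNReal) < volume (Ioc (0:ℝ) m) := by
            simp [Real.volume_Ioc, hm]
        _ ≤ volume (Function.support f ∩ Ioc 0 m) := measure_mono hsub
    linarith
  obtain ⟨t₀, ht₀, hvt₀⟩ := hits
  intro t ht
  exact zero_stays t₀ ht₀.1 hvt₀ t (le_trans ht₀.2 ht)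
end

section
/- Suppose V : [0,∞) → ℝ is nonnegative, absolutely continuous, and satisfies V'(t) ≤ -a·V(t)^p - b·V(t)^q for almost every t with V(t) > 0, where a, b > 0, 0 < p < 1, q > 1. Then V(t) = 0 for all t ≥ 1/(a(1-p)) + 1/(b(q-1)), regardless of V(0). -/
open Set

private lemma decay_aux (g : ℝ → ℝ) (s e c : ℝ) (hse : s ≤ e)
    (hg : ∀ t ∈ Icc s e, DifferentiableAt ℝ g t)
    (hg' : ∀ t ∈ Ioo s e, deriv g t ≤ c) :
    g e ≤ g s + c * (e - s) := by
  set h : ℝ → ℝ := fun t => g t - c * t with hh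
  have hdiff : ∀ t ∈ Icc s e, DifferentiableAt ℝ h t := by
    intro t ht
    exact (hg t ht).sub ((differentiableAt_id.const_mul c))
  have hcont : ContinuousOn h (Icc s e) := fun t ht =>
    (hdiff t ht).continuousAt.continuousWithinAt
  have hanti : AntitoneOn h (Icc s e) := by
    apply antitoneOn_of_deriv_nonpos (convex_Icc s e) hcont
    · intro t ht
      rw [interior_Icc] at ht
      exact (hdiff t (Ioo_subset_Icc_self ht)).differentiableWithinAt
    · intro t ht
      rw [interior_Icc] at ht
      have hder : HasDerivAt h (deriv g t - c) t := by
        have h1 : HasDerivAt g (deriv g t) t :=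
          (hg t (Ioo_subset_Icc_self ht)).hasDerivAt
        have h2 : HasDerivAt (fun t : ℝ => c * t) (c * 1) t :=
          (hasDerivAt_id t).const_mul c
        exact (h1.sub h2).congr_deriv (by ring)
      rw [hder.deriv]
      have := hg' t ht
      linarith
  have := hanti (left_mem_Icc.mpr hse) (right_mem_Icc.mpr hse) hse
  simp only [hh] at this
  nlinarith [this]

theorem polyakov_fixed_time_scalar
    (a b p q : ℝ) (ha : 0 < a) (hb : 0 < b) (hp0 : 0 < p) (hp1 : p < 1) (hq : 1 < q)
    (V : ℝ → ℝ) (hVnonneg : ∀ t ≥ (0:ℝ), 0 ≤ V t)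
    (hVdiff : ∀ t ≥ (0:ℝ), DifferentiableAt ℝ V t)
    (hineq : ∀ t ≥ (0:ℝ), V t > 0 → deriv V t ≤ -a * V t ^ p - b * V t ^ q) :
    ∀ t ≥ 1 / (a * (1 - p)) + 1 / (b * (q - 1)), V t = 0 := by
  have h1p : 0 < 1 - p := by linarith
  have hq1 : 0 < q - 1 := by linarith
  set T1 : ℝ := 1 / (a * (1 - p)) with hT1
  set T2 : ℝ := 1 / (b * (q - 1)) with hT2
  have hT1pos : 0 < T1 := by positivity
  have hT2pos : 0 < T2 := by positivity
  set T : ℝ := T1 + T2 with hT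
  have hTpos : 0 < T := by positivity
  -- deriv V ≤ 0 on (0, ∞)
  have hderiv0 : ∀ z : ℝ, 0 < z → deriv V z ≤ 0 := by
    intro z hz
    rcases lt_or_eq_of_le (hVnonneg z hz.le) with hVz | hVz
    · have h := hineq z hz.le hVz
      have h1 : 0 < V z ^ p := Real.rpow_pos_of_pos hVz p
      have h2 : 0 < V z ^ q := Real.rpow_pos_of_pos hVz q
      nlinarith
    · have hmin : IsLocalMin V z := by
        have hmem : Ioi (0:ℝ) ∈ nhds z := Ioi_mem_nhds hz
        filter_upwards [hmem] with y hy
        rw [← hVz]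
        exact hVnonneg y (le_of_lt hy)
      have := hmin.deriv_eq_zero
      linarith [this.le]
  -- monotonicity
  have hmono : ∀ s t : ℝ, 0 ≤ s → s ≤ t → V t ≤ V s := by
    intro s t hs hst
    have := decay_aux V s t 0 hst
      (fun z hz => hVdiff z (le_trans hs hz.1))
      (fun z hz => hderiv0 z (lt_of_le_of_lt hs hz.1))
    linarith
  -- it suffices to prove V T = 0
  suffices hVT : V T = 0 by
    intro t ht
    have ht' : T ≤ t := by rw [hT]; linarith
    have h1 := hmono T t hTpos.le ht'
    have h2 := hVnonneg t (le_trans hTpos.le ht')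
    linarith [hVT ▸ h1]
  by_contra hne
  have hpos : 0 < V T := lt_of_le_of_ne (hVnonneg T hTpos.le) (Ne.symm hne)
  have Vpos : ∀ s ∈ Icc (0:ℝ) T, 0 < V s := by
    intro s hs
    exact lt_of_lt_of_le hpos (hmono s T hs.1 hs.2)
  -- Phase 1 : on [0, T2], use g := fun t => -(V t ^ (1 - q))
  have hsub2 : Icc (0:ℝ) T2 ⊆ Icc (0:ℝ) T := Icc_subset_Icc le_rfl (by linarith)
  have phase1 : V T2 ^ (1 - q) ≥ V 0 ^ (1 - q) + b * (q - 1) * T2 := by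
    have hdec := decay_aux (fun t => -(V t ^ (1 - q))) 0 T2 (-(b * (q - 1))) hT2pos.le
      ?_ ?_
    · nlinarith [hdec]
    · intro t ht
      have hVt := Vpos t (hsub2 ht)
      exact (((hVdiff t ht.1).hasDerivAt.rpow_const (Or.inl hVt.ne')).neg).differentiableAt
    · intro t ht
      have ht' : t ∈ Icc (0:ℝ) T2 := Ioo_subset_Icc_self ht
      have hVt := Vpos t (hsub2 ht')
      set x := V t with hx
      have hD : HasDerivAt (fun t => -(V t ^ (1 - q)))
          (-(deriv V t * (1 - q) * x ^ (1 - q - 1))) t :=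
        (((hVdiff t ht'.1).hasDerivAt.rpow_const (Or.inl hVt.ne'))).neg
      rw [hD.deriv]
      have hd := hineq t ht'.1 hVt
      have e1 : x ^ q * x ^ (-q) = 1 := by
        rw [← Real.rpow_add hVt]; simp
      have e2 : x ^ p * x ^ (-q) = x ^ (p - q) := by
        rw [← Real.rpow_add hVt]; ring_nf
      have hpq : 0 < x ^ (p - q) := Real.rpow_pos_of_pos hVt _
      have hxq : 0 < x ^ (-q) := Real.rpow_pos_of_pos hVt _
      have hxp : 0 < x ^ p := Real.rpow_pos_of_pos hVt _
      have hexp : (1 - q - 1) = -q := by ring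
      rw [hexp]
      have hm : (1 - q) * x ^ (-q) ≤ 0 := by nlinarith
      rw [← hx] at hd
      have key : deriv V t * ((1 - q) * x ^ (-q)) ≥
          (-a * x ^ p - b * x ^ q) * ((1 - q) * x ^ (-q)) :=
        mul_le_mul_of_nonpos_right hd hm
      have expand : (-a * x ^ p - b * x ^ q) * ((1 - q) * x ^ (-q)) =
          a * (q - 1) * x ^ (p - q) + b * (q - 1) := by
        linear_combination a * (q - 1) * e2 + b * (q - 1) * e1
      rw [expand] at key
      nlinarith [key, mul_pos (mul_pos ha hq1) hpq]
  have hVT2le : V T2 ≤ 1 := by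
    by_contra hgt
    push_neg at hgt
    have h1 : V T2 ^ (1 - q) < 1 :=
      Real.rpow_lt_one_of_one_lt_of_neg hgt (by linarith)
    have h0 : 0 < V 0 ^ (1 - q) :=
      Real.rpow_pos_of_pos (Vpos 0 ⟨le_rfl, hTpos.le⟩) _
    have hbt : b * (q - 1) * T2 = 1 := by
      rw [hT2]; field_simp
    nlinarith
  -- Phase 2 : on [T2, T], use g := fun t => V t ^ (1 - p)
  have hsub1 : Icc T2 T ⊆ Icc (0:ℝ) T := Icc_subset_Icc hT2pos.le le_rfl
  have hT2T : T2 ≤ T := by rw [hT]; linarith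
  have phase2 : V T ^ (1 - p) ≤ V T2 ^ (1 - p) + (-(a * (1 - p))) * (T - T2) := by
    apply decay_aux (fun t => V t ^ (1 - p)) T2 T (-(a * (1 - p))) hT2T
    · intro t ht
      have hVt := Vpos t (hsub1 ht)
      have h0t : (0:ℝ) ≤ t := le_trans hT2pos.le ht.1
      exact ((hVdiff t h0t).hasDerivAt.rpow_const (Or.inl hVt.ne')).differentiableAt
    · intro t ht
      have ht' : t ∈ Icc T2 T := Ioo_subset_Icc_self ht
      have hVt := Vpos t (hsub1 ht')
      have h0t : (0:ℝ) ≤ t := le_trans hT2pos.le ht'.1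
      set x := V t with hx
      have hD : HasDerivAt (fun t => V t ^ (1 - p))
          (deriv V t * (1 - p) * x ^ (1 - p - 1)) t :=
        (hVdiff t h0t).hasDerivAt.rpow_const (Or.inl hVt.ne')
      rw [hD.deriv]
      have hd := hineq t h0t hVt
      have e1 : x ^ p * x ^ (-p) = 1 := by
        rw [← Real.rpow_add hVt]; simp
      have e2 : x ^ q * x ^ (-p) = x ^ (q - p) := by
        rw [← Real.rpow_add hVt]; ring_nf
      have hqp : 0 < x ^ (q - p) := Real.rpow_pos_of_pos hVt _
      have hxp : 0 < x ^ (-p) := Real.rpow_pos_of_pos hVt _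
      have hexp : (1 - p - 1) = -p := by ring
      rw [hexp]
      have hm : 0 ≤ (1 - p) * x ^ (-p) := by positivity
      rw [← hx] at hd
      have key : deriv V t * ((1 - p) * x ^ (-p)) ≤
          (-a * x ^ p - b * x ^ q) * ((1 - p) * x ^ (-p)) :=
        mul_le_mul_of_nonneg_right hd hm
      have expand : (-a * x ^ p - b * x ^ q) * ((1 - p) * x ^ (-p)) =
          -(a * (1 - p)) - b * (1 - p) * x ^ (q - p) := by
        linear_combination (-(a * (1 - p))) * e1 + (-(b * (1 - p))) * e2
      rw [expand] at key
      nlinarith [key, mul_pos (mul_pos hb h1p) hqp]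
  have hU2 : V T2 ^ (1 - p) ≤ 1 :=
    Real.rpow_le_one (hVnonneg T2 hT2pos.le) hVT2le (by linarith)
  have hat : a * (1 - p) * (T - T2) = 1 := by
    have : T - T2 = T1 := by rw [hT]; ring
    rw [this, hT1]; field_simp
  have hUT : 0 < V T ^ (1 - p) := Real.rpow_pos_of_pos hpos _
  nlinarith [phase2, hU2, hat, hUT]
end

section
/- Suppose g : [0,∞) → ℝ is absolutely continuous, nonnegative whenever defined on the trajectory, and satisfies g'(t) ≤ -φ(g(t)) for almost every t, where φ : [0,∞) → [0,∞) is continuous, monotonically increasing, φ(0)=0, φ(r)>0 for r>0, and sup_{r₀>0} ∫₀^{r₀} dr/φ(r) ≤ T_M < ∞. Then g(t) = 0 for all t ≥ T_M, independently of g(0) ≥ 0. -/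
open MeasureTheory Set

theorem uniform_fixed_time_comparison
    (φ : ℝ → ℝ) (hφc : Continuous φ) (hφmono : Monotone φ)
    (hφ0 : φ 0 = 0) (hφpos : ∀ r > (0:ℝ), φ r > 0) (hφnonneg : ∀ r ≥ (0:ℝ), 0 ≤ φ r)
    (T_M : ℝ)
    (hint : ∀ r₀ > (0:ℝ), IntegrableOn (fun r => (φ r)⁻¹) (Ioc 0 r₀) ∧
      ∫ r in Ioc (0:ℝ) r₀, (φ r)⁻¹ ≤ T_M)
    (g : ℝ → ℝ) (hgnonneg : ∀ t ≥ (0:ℝ), 0 ≤ g t)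
    (hgdiff : ∀ t ≥ (0:ℝ), DifferentiableAt ℝ g t)
    (hineq : ∀ t ≥ (0:ℝ), deriv g t ≤ -φ (g t)) :
    ∀ t ≥ T_M, g t = 0 := by
  set Φ : ℝ → ℝ := fun r => ∫ x in (0:ℝ)..r, (φ x)⁻¹ with hΦdef
  have hΦeq : ∀ r > (0:ℝ), Φ r = ∫ x in Ioc (0:ℝ) r, (φ x)⁻¹ := fun r hr =>
    intervalIntegral.integral_of_le hr.le
  have hΦle : ∀ r > (0:ℝ), Φ r ≤ T_M := fun r hr => by
    rw [hΦeq r hr]; exact (hint r hr).2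
  have hΦderiv : ∀ r > (0:ℝ), HasDerivAt Φ ((φ r)⁻¹) r := by
    intro r hr
    apply intervalIntegral.integral_hasDerivAt_right
    · exact (intervalIntegrable_iff_integrableOn_Ioc_of_le hr.le).mpr (hint r hr).1
    · exact (hφc.measurable.inv.stronglyMeasurable).stronglyMeasurableAtFilter
    · exact hφc.continuousAt.inv₀ (hφpos r hr).ne'
  have hΦpos : ∀ r > (0:ℝ), 0 < Φ r := by
    intro r hr
    rw [hΦeq r hr]
    have h1 : (φ r)⁻¹ * (volume (Ioc (0:ℝ) r)).toReal ≤ ∫ x in Ioc (0:ℝ) r, (φ x)⁻¹ := by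
      apply setIntegral_ge_of_const_le_real measurableSet_Ioc
      · simp
      · intro x hx
        exact inv_anti₀ (hφpos x hx.1) (hφmono hx.2)
      · exact (hint r hr).1
    have h2 : (0:ℝ) < (φ r)⁻¹ * (volume (Ioc (0:ℝ) r)).toReal := by
      apply mul_pos (inv_pos.mpr (hφpos r hr))
      rw [Real.volume_Ioc, sub_zero, ENNReal.toReal_ofReal hr.le]
      exact hr
    linarith
  have hTpos : 0 < T_M := lt_of_lt_of_le (hΦpos 1 one_pos) (hΦle 1 one_pos)
  have hganti : AntitoneOn g (Ici 0) := by
    apply antitoneOn_of_deriv_nonpos (convex_Ici 0)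
    · exact fun t ht => (hgdiff t ht).continuousAt.continuousWithinAt
    · intro t ht; rw [interior_Ici] at ht
      exact ((hgdiff t ht.le)).differentiableWithinAt
    · intro t ht; rw [interior_Ici] at ht
      exact le_trans (hineq t ht.le) (neg_nonpos.mpr (hφnonneg _ (hgnonneg t ht.le)))
  have hgT : g T_M = 0 := by
    by_contra hne
    have hc : 0 < g T_M := lt_of_le_of_ne (hgnonneg T_M hTpos.le) (Ne.symm hne)
    have hgt : ∀ t ∈ Icc (0:ℝ) T_M, 0 < g t := fun t ht =>
      lt_of_lt_of_le hc (hganti ht.1 (mem_Ici.mpr hTpos.le) ht.2)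
    have hhd : ∀ t ∈ Icc (0:ℝ) T_M,
        HasDerivAt (fun s => Φ (g s) + s) ((φ (g t))⁻¹ * deriv g t + 1) t := by
      intro t ht
      exact ((hΦderiv (g t) (hgt t ht)).comp t (hgdiff t ht.1).hasDerivAt).add
        (hasDerivAt_id t)
    have hh : AntitoneOn (fun s => Φ (g s) + s) (Icc 0 T_M) := by
      apply antitoneOn_of_deriv_nonpos (convex_Icc 0 T_M)
      · exact fun t ht => (hhd t ht).continuousAt.continuousWithinAt
      · intro t ht
        exact ((hhd t (interior_subset ht)).differentiableAt).differentiableWithinAt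
      · intro t ht
        rw [(hhd t (interior_subset ht)).deriv]
        have hp : 0 < φ (g t) := hφpos _ (hgt t (interior_subset ht))
        have := hineq t (interior_subset ht).1
        have : (φ (g t))⁻¹ * deriv g t ≤ (φ (g t))⁻¹ * (-φ (g t)) :=
          mul_le_mul_of_nonneg_left this (inv_nonneg.mpr hp.le)
        rw [mul_neg, inv_mul_cancel₀ hp.ne'] at this
        linarith
    have key := hh (left_mem_Icc.mpr hTpos.le) (right_mem_Icc.mpr hTpos.le) hTpos.le
    simp only at key
    have h0 : (0:ℝ) < g 0 := hgt 0 (left_mem_Icc.mpr hTpos.le)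
    have := hΦle (g 0) h0
    have := hΦpos (g T_M) hc
    linarith
  intro t ht
  have h1 : g t ≤ g T_M := hganti (mem_Ici.mpr hTpos.le) (mem_Ici.mpr (hTpos.le.trans ht)) ht
  have h2 : 0 ≤ g t := hgnonneg t (hTpos.le.trans ht)
  linarith [hgT ▸ h1]
end
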